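/- Let a > 0 be real, λ ∈ ℂ with λ ≠ 0 and λ² + a² ≠ 0, and ω ∈ ℂ with Re ω > 0, ω ≠ a, and ω² = λ + a² + a²/λ. Set E(x) := (1/(2ω)) ∫₀^∞ e^{−ω|x−y|} e^{−a y} dy for x ≥ 0. Then E(0) = 1/(2ω(ω+a)) ≠ 0, and for every x ≥ 0: E(x)/E(0) = (2ωλ(ω+a)/(λ²+a²)) e^{−a x} − (λ(ω+a)²/(λ²+a²)) e^{−ω x}; moreover −e^{−ω x} + E(x)/E(0) = (2ωλ(ω+a)/(λ²+a²)) (e^{−a x} − e^{−ω x}). -/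

import Mathlib

open MeasureTheory

open MeasureTheory Set Filter Complex Topology

lemma cexp_aux_integrableOn (c : ℂ) (hc : 0 < c.re) (x : ℝ) :
    IntegrableOn (fun y : ℝ => Complex.exp (-c * y)) (Set.Ioi x) := by
  have hb : IntegrableOn (fun y : ℝ => Real.exp (-c.re * y)) (Set.Ioi x) :=
    exp_neg_integrableOn_Ioi x hc
  refine hb.mono' ?_ ?_
  · exact (Complex.continuous_exp.comp
      ((continuous_const.mul Complex.continuous_ofReal))).aestronglyMeasurable
  · filter_upwards with y
    rw [Complex.norm_exp]
    simp [Complex.mul_re]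

lemma cexp_aux_integral_Ioi (c : ℂ) (hc : 0 < c.re) (x : ℝ) :
    ∫ y in Set.Ioi x, Complex.exp (-c * y) = Complex.exp (-c * x) / c := by
  have hc0 : c ≠ 0 := fun h => by simp [h] at hc
  have hderiv : ∀ y ∈ Set.Ici x, HasDerivAt (fun y : ℝ => -Complex.exp (-c * y) / c)
      (Complex.exp (-c * y)) y := by
    intro y _
    have h1 : HasDerivAt (fun y : ℝ => ((y : ℝ) : ℂ)) 1 y := by
      simpa using (hasDerivAt_id y).ofReal_comp
    have h3 := (((h1.const_mul (-c)).cexp).div_const c).neg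
    have e : (fun y : ℝ => -Complex.exp (-c * y) / c) = -fun x : ℝ => Complex.exp (-c * x) / c := by
      funext z; simp [neg_div]
    rw [e]
    exact h3.congr_deriv (by rw [mul_one]; field_simp)
  have htend : Tendsto (fun y : ℝ => -Complex.exp (-c * y) / c) atTop (𝓝 0) := by
    have hle : ∀ y : ℝ, ‖-Complex.exp (-c * y) / c‖ ≤ Real.exp (-(c.re * y)) / ‖c‖ := by
      intro y
      rw [norm_div, norm_neg, Complex.norm_exp]
      apply le_of_eq
      congr 2
      simp [Complex.mul_re]
    have h1 : Tendsto (fun y : ℝ => Real.exp (-(c.re * y)) / ‖c‖) atTop (𝓝 0) := by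
      simpa using (Real.tendsto_exp_neg_atTop_nhds_zero.comp
        (tendsto_id.const_mul_atTop hc)).div_const ‖c‖
    exact squeeze_zero_norm hle h1
  rw [MeasureTheory.integral_Ioi_of_hasDerivAt_of_tendsto' hderiv
    (cexp_aux_integrableOn c hc x) htend]
  rw [zero_sub, neg_div, neg_neg]

/-- With `a > 0` real, `λ ∈ ℂ`, `λ ≠ 0`, `λ² + a² ≠ 0`, and `ω ∈ ℂ` with
`Re ω > 0`, `ω ≠ a`, `ω² = λ + a² + a²/λ`, the function
`E(x) = (1/(2ω)) ∫₀^∞ e^{-ω|x-y|} e^{-ay} dy` satisfies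
`E(0) = 1/(2ω(ω+a)) ≠ 0`, and for `x ≥ 0`,
`E(x)/E(0) = (2ωλ(ω+a)/(λ²+a²)) e^{-ax} - (λ(ω+a)²/(λ²+a²)) e^{-ωx}`
and `-e^{-ωx} + E(x)/E(0) = (2ωλ(ω+a)/(λ²+a²)) (e^{-ax} - e^{-ωx})`. -/
theorem stmt_2 (a : ℝ) (ha : 0 < a) (lam : ℂ) (hlam : lam ≠ 0)
    (hlam2 : lam ^ 2 + (a : ℂ) ^ 2 ≠ 0)
    (ω : ℂ) (hω : 0 < ω.re) (hωa : ω ≠ (a : ℂ))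
    (hω2 : ω ^ 2 = lam + (a : ℂ) ^ 2 + (a : ℂ) ^ 2 / lam)
    (E : ℝ → ℂ)
    (hE : ∀ x : ℝ, E x = (1 / (2 * ω)) * ∫ y in Set.Ioi (0 : ℝ),
      Complex.exp (-ω * ((|x - y| : ℝ) : ℂ)) * Complex.exp (-(a : ℂ) * (y : ℂ))) :
    E 0 = 1 / (2 * ω * (ω + (a : ℂ))) ∧ E 0 ≠ 0 ∧
    (∀ x : ℝ, 0 ≤ x →
      E x / E 0 = (2 * ω * lam * (ω + (a : ℂ)) / (lam ^ 2 + (a : ℂ) ^ 2))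
            * Complex.exp (-(a : ℂ) * (x : ℂ))
          - (lam * (ω + (a : ℂ)) ^ 2 / (lam ^ 2 + (a : ℂ) ^ 2))
            * Complex.exp (-ω * (x : ℂ))) ∧
    (∀ x : ℝ, 0 ≤ x →
      -Complex.exp (-ω * (x : ℂ)) + E x / E 0
        = (2 * ω * lam * (ω + (a : ℂ)) / (lam ^ 2 + (a : ℂ) ^ 2))
            * (Complex.exp (-(a : ℂ) * (x : ℂ)) - Complex.exp (-ω * (x : ℂ)))) := by
  have hω0 : ω ≠ 0 := fun h => by simp [h] at hω
  have hre : 0 < (ω + (a : ℂ)).re := by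
    simp only [Complex.add_re, Complex.ofReal_re]; linarith
  have hωp : ω + (a : ℂ) ≠ 0 := fun h => by simp [h] at hre
  have hωm : ω - (a : ℂ) ≠ 0 := sub_ne_zero.mpr hωa
  have hkey : (ω - (a : ℂ)) * (ω + (a : ℂ)) * lam = lam ^ 2 + (a : ℂ) ^ 2 := by
    have h := hω2
    field_simp at h
    linear_combination h
  -- main formula
  have hEx : ∀ x : ℝ, 0 ≤ x → E x = (1 / (2 * ω)) *
      ((Complex.exp (-(a : ℂ) * x) - Complex.exp (-ω * x)) / (ω - a)
        + Complex.exp (-(a : ℂ) * x) / (ω + a)) := by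
    intro x hx
    rw [hE]
    congr 1
    have hcont : Continuous fun y : ℝ =>
        Complex.exp (-ω * ((|x - y| : ℝ) : ℂ)) * Complex.exp (-(a : ℂ) * (y : ℂ)) := by
      apply Continuous.mul
      · exact Complex.continuous_exp.comp (continuous_const.mul
          (Complex.continuous_ofReal.comp ((continuous_const.sub continuous_id).abs)))
      · exact Complex.continuous_exp.comp (continuous_const.mul Complex.continuous_ofReal)
    have hint2' : IntegrableOn (fun y : ℝ =>
        Complex.exp (ω * x) * Complex.exp (-(ω + a) * y)) (Set.Ioi x) :=
      (cexp_aux_integrableOn (ω + a) hre x).const_mul _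
    have heq2 : Set.EqOn (fun y : ℝ => Complex.exp (ω * x) * Complex.exp (-(ω + a) * y))
        (fun y : ℝ => Complex.exp (-ω * ((|x - y| : ℝ) : ℂ)) * Complex.exp (-(a : ℂ) * (y : ℂ)))
        (Set.Ioi x) := by
      intro y hy
      simp only [Set.mem_Ioi] at hy
      have habs : |x - y| = y - x := by rw [abs_of_nonpos (by linarith)]; ring
      show Complex.exp (ω * x) * Complex.exp (-(ω + a) * y)
        = Complex.exp (-ω * ((|x - y| : ℝ) : ℂ)) * Complex.exp (-(a : ℂ) * (y : ℂ))
      rw [habs, ← Complex.exp_add, ← Complex.exp_add]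
      congr 1
      push_cast
      ring
    have hint2 : IntegrableOn (fun y : ℝ =>
        Complex.exp (-ω * ((|x - y| : ℝ) : ℂ)) * Complex.exp (-(a : ℂ) * (y : ℂ)))
        (Set.Ioi x) := hint2'.congr_fun heq2 measurableSet_Ioi
    have hint1 : IntegrableOn (fun y : ℝ =>
        Complex.exp (-ω * ((|x - y| : ℝ) : ℂ)) * Complex.exp (-(a : ℂ) * (y : ℂ)))
        (Set.Ioc 0 x) := hcont.integrableOn_Ioc
    rw [← Set.Ioc_union_Ioi_eq_Ioi hx,
      MeasureTheory.setIntegral_union (Set.Ioc_disjoint_Ioi le_rfl) measurableSet_Ioi hint1 hint2]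
    have hI1 : (∫ y in Set.Ioc (0 : ℝ) x,
        Complex.exp (-ω * ((|x - y| : ℝ) : ℂ)) * Complex.exp (-(a : ℂ) * (y : ℂ)))
        = Complex.exp (-ω * x) * ((Complex.exp ((ω - a) * x) - 1) / (ω - a)) := by
      rw [MeasureTheory.setIntegral_congr_fun measurableSet_Ioc
        (g := fun y : ℝ => Complex.exp (-ω * x) * Complex.exp ((ω - a) * y)) ?_]
      · rw [MeasureTheory.integral_const_mul _ _, ← intervalIntegral.integral_of_le hx,
          integral_exp_mul_complex hωm]
        norm_num
      · intro y hy
        simp only [Set.mem_Ioc] at hy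
        have habs : |x - y| = x - y := abs_of_nonneg (by linarith [hy.2])
        show Complex.exp (-ω * ((|x - y| : ℝ) : ℂ)) * Complex.exp (-(a : ℂ) * (y : ℂ))
          = Complex.exp (-ω * x) * Complex.exp ((ω - a) * y)
        rw [habs, ← Complex.exp_add, ← Complex.exp_add]
        congr 1
        push_cast
        ring
    have hI2 : (∫ y in Set.Ioi x,
        Complex.exp (-ω * ((|x - y| : ℝ) : ℂ)) * Complex.exp (-(a : ℂ) * (y : ℂ)))
        = Complex.exp (ω * x) * (Complex.exp (-(ω + a) * x) / (ω + a)) := by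
      rw [← MeasureTheory.setIntegral_congr_fun measurableSet_Ioi heq2,
        MeasureTheory.integral_const_mul _ _, cexp_aux_integral_Ioi (ω + a) hre x]
    rw [hI1, hI2]
    have e1 : Complex.exp (-ω * x) * Complex.exp ((ω - a) * x) = Complex.exp (-(a : ℂ) * x) := by
      rw [← Complex.exp_add]; congr 1; ring
    have e2 : Complex.exp (ω * x) * Complex.exp (-(ω + a) * x) = Complex.exp (-(a : ℂ) * x) := by
      rw [← Complex.exp_add]; congr 1; ring
    rw [← mul_div_assoc, ← mul_div_assoc, mul_sub, e1, e2, mul_one]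
  have hE0 : E 0 = 1 / (2 * ω * (ω + (a : ℂ))) := by
    have h := hEx 0 le_rfl
    simp only [Complex.ofReal_zero, mul_zero, Complex.exp_zero, sub_self, zero_div, zero_add] at h
    rw [h]
    field_simp
  have hE0ne : E 0 ≠ 0 := by
    rw [hE0]
    exact one_div_ne_zero (mul_ne_zero (mul_ne_zero two_ne_zero hω0) hωp)
  have hdiv : ∀ x : ℝ, 0 ≤ x → E x / E 0 = (2 * ω * (ω + (a : ℂ))) * E x := by
    intro x hx
    rw [hE0, div_div_eq_mul_div, div_one]
    ring
  refine ⟨hE0, hE0ne, ?_, ?_⟩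
  · intro x hx
    rw [hdiv x hx, hEx x hx, ← hkey]
    set u := Complex.exp (-(a : ℂ) * x) with hu
    set v := Complex.exp (-ω * x) with hv
    field_simp
    ring
  · intro x hx
    rw [hdiv x hx, hEx x hx, ← hkey]
    set u := Complex.exp (-(a : ℂ) * x) with hu
    set v := Complex.exp (-ω * x) with hv
    field_simp
    ring
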